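/- arXiv:2601.19009 — 8 statements merged into one kernel-verified Lean document; each statement's English description precedes it below -/
import Mathlib

section
/- With generalized translation T_n defined via the Laplacian eigenbasis of a connected graph, for any g ∈ C^N and vertex n, ‖T_n g‖_2^2 ≤ N ν_n^2 ‖g‖_2^2, where ν_n = max_ℓ |χ_ℓ(n)|. -/
open Finset

noncomputable def gft {N : ℕ} (χ : Fin N → Fin N → ℂ) (f : Fin N → ℂ) (ℓ : Fin N) : ℂ :=
  ∑ i, f i * starRingEnd ℂ (χ ℓ i)

noncomputable def gtrans {N : ℕ} (χ : Fin N → Fin N → ℂ) (n : Fin N) (f : Fin N → ℂ)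
    (i : Fin N) : ℂ :=
  ((Real.sqrt N : ℝ) : ℂ) * ∑ ℓ, gft χ f ℓ * starRingEnd ℂ (χ ℓ n) * χ ℓ i

noncomputable def ip {N : ℕ} (f g : Fin N → ℂ) : ℂ :=
  ∑ i, f i * starRingEnd ℂ (g i)

noncomputable def nrm {N : ℕ} (f : Fin N → ℂ) : ℝ :=
  Real.sqrt (∑ i, ‖f i‖ ^ 2)

def IsONB {N : ℕ} (χ : Fin N → Fin N → ℂ) : Prop :=
  ∀ ℓ ℓ' : Fin N, (∑ i, χ ℓ i * starRingEnd ℂ (χ ℓ' i)) = if ℓ = ℓ' then 1 else 0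

noncomputable def atom {N : ℕ} (χ : Fin N → Fin N → ℂ) (g : Fin N → ℂ) (n k i : Fin N) : ℂ :=
  (N : ℂ) * χ k i * ∑ ℓ, gft χ g ℓ * starRingEnd ℂ (χ ℓ n) * χ ℓ i

-- columns orthonormal
lemma colONB {N : ℕ} (χ : Fin N → Fin N → ℂ) (hχ : IsONB χ) (i j : Fin N) :
    (∑ ℓ, starRingEnd ℂ (χ ℓ i) * χ ℓ j) = if i = j then 1 else 0 := by
  let A : Matrix (Fin N) (Fin N) ℂ := fun ℓ i => χ ℓ i
  have h1 : A * A.conjTranspose = 1 := by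
    ext ℓ ℓ'
    simp only [Matrix.mul_apply, Matrix.conjTranspose_apply]
    simpa [Matrix.mul_apply, A, Matrix.conjTranspose_apply, Matrix.one_apply] using hχ ℓ ℓ'
  have h2 : A.conjTranspose * A = 1 := mul_eq_one_comm.mp h1
  have := congrFun (congrFun h2 i) j
  simp only [Matrix.mul_apply, Matrix.conjTranspose_apply] at this
  simpa [Matrix.mul_apply, A, Matrix.conjTranspose_apply, Matrix.one_apply] using this

lemma keysum {N : ℕ} (χ : Fin N → Fin N → ℂ) (hχ : IsONB χ) (a : Fin N → ℂ) :
    ∑ i, (∑ ℓ, a ℓ * χ ℓ i) * starRingEnd ℂ (∑ ℓ, a ℓ * χ ℓ i)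
      = ∑ ℓ, a ℓ * starRingEnd ℂ (a ℓ) := by
  have step1 : ∀ i : Fin N, (∑ ℓ, a ℓ * χ ℓ i) * starRingEnd ℂ (∑ ℓ, a ℓ * χ ℓ i)
      = ∑ ℓ, ∑ ℓ', (a ℓ * starRingEnd ℂ (a ℓ')) * (χ ℓ i * starRingEnd ℂ (χ ℓ' i)) := by
    intro i
    rw [map_sum, Finset.sum_mul_sum]
    refine Finset.sum_congr rfl fun ℓ _ => Finset.sum_congr rfl fun ℓ' _ => ?_
    simp [map_mul]; ring
  calc ∑ i, (∑ ℓ, a ℓ * χ ℓ i) * starRingEnd ℂ (∑ ℓ, a ℓ * χ ℓ i)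
      = ∑ i, ∑ ℓ, ∑ ℓ', (a ℓ * starRingEnd ℂ (a ℓ')) * (χ ℓ i * starRingEnd ℂ (χ ℓ' i)) :=
        Finset.sum_congr rfl fun i _ => step1 i
    _ = ∑ ℓ, ∑ ℓ', (a ℓ * starRingEnd ℂ (a ℓ')) * ∑ i, χ ℓ i * starRingEnd ℂ (χ ℓ' i) := by
        rw [Finset.sum_comm]
        refine Finset.sum_congr rfl fun ℓ _ => ?_
        rw [Finset.sum_comm]
        exact Finset.sum_congr rfl fun ℓ' _ => (Finset.mul_sum _ _ _).symm
    _ = ∑ ℓ, a ℓ * starRingEnd ℂ (a ℓ) := by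
        refine Finset.sum_congr rfl fun ℓ _ => ?_
        simp [hχ ℓ]

lemma parseval {N : ℕ} (χ : Fin N → Fin N → ℂ) (hχ : IsONB χ) (g : Fin N → ℂ) :
    ∑ ℓ, gft χ g ℓ * starRingEnd ℂ (gft χ g ℓ) = ∑ i, g i * starRingEnd ℂ (g i) := by
  have step1 : ∀ ℓ : Fin N, gft χ g ℓ * starRingEnd ℂ (gft χ g ℓ)
      = ∑ i, ∑ j, (g i * starRingEnd ℂ (g j)) * (starRingEnd ℂ (χ ℓ i) * χ ℓ j) := by
    intro ℓ
    rw [gft, map_sum, Finset.sum_mul_sum]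
    refine Finset.sum_congr rfl fun i _ => Finset.sum_congr rfl fun j _ => ?_
    simp [map_mul]; ring
  calc ∑ ℓ, gft χ g ℓ * starRingEnd ℂ (gft χ g ℓ)
      = ∑ ℓ, ∑ i, ∑ j, (g i * starRingEnd ℂ (g j)) * (starRingEnd ℂ (χ ℓ i) * χ ℓ j) :=
        Finset.sum_congr rfl fun ℓ _ => step1 ℓ
    _ = ∑ i, ∑ j, (g i * starRingEnd ℂ (g j)) * ∑ ℓ, starRingEnd ℂ (χ ℓ i) * χ ℓ j := by
        rw [Finset.sum_comm]
        refine Finset.sum_congr rfl fun i _ => ?_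
        rw [Finset.sum_comm]
        exact Finset.sum_congr rfl fun j _ => (Finset.mul_sum _ _ _).symm
    _ = ∑ i, g i * starRingEnd ℂ (g i) := by
        refine Finset.sum_congr rfl fun i _ => ?_
        simp [colONB χ hχ]

lemma abs_sq_sum {N : ℕ} (f : Fin N → ℂ) :
    ((∑ i, ‖f i‖ ^ 2 : ℝ) : ℂ) = ∑ i, f i * starRingEnd ℂ (f i) := by
  push_cast
  refine Finset.sum_congr rfl fun i _ => ?_
  rw [Complex.mul_conj, ← Complex.ofReal_pow, Complex.sq_norm]

theorem stmt5 {N : ℕ} (χ : Fin N → Fin N → ℂ) (hχ : IsONB χ)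
    (g : Fin N → ℂ) (n : Fin N) (ν : ℝ)
    (hν : IsGreatest {x : ℝ | ∃ ℓ : Fin N, x = ‖χ ℓ n‖} ν) :
    nrm (gtrans χ n g) ^ 2 ≤ (N : ℝ) * ν ^ 2 * nrm g ^ 2 := by
  set a : Fin N → ℂ := fun ℓ => gft χ g ℓ * starRingEnd ℂ (χ ℓ n) with ha
  have hν0 : 0 ≤ ν := by
    obtain ⟨ℓ₀, hℓ₀⟩ := hν.1
    rw [hℓ₀]; positivity
  -- nrm squared identities
  have hnrm : ∀ f : Fin N → ℂ, nrm f ^ 2 = ∑ i, ‖f i‖ ^ 2 := by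
    intro f
    rw [nrm, Real.sq_sqrt]
    positivity
  have hgt : ∀ i, ‖gtrans χ n g i‖ ^ 2 = (N : ℝ) * ‖∑ ℓ, a ℓ * χ ℓ i‖ ^ 2 := by
    intro i
    rw [gtrans, norm_mul, mul_pow, Complex.norm_real, Real.norm_eq_abs, abs_of_nonneg (Real.sqrt_nonneg _),
      Real.sq_sqrt (Nat.cast_nonneg N)]
  -- key equality 1
  have e1 : ∑ i, ‖∑ ℓ, a ℓ * χ ℓ i‖ ^ 2 = ∑ ℓ, ‖a ℓ‖ ^ 2 := by
    have := keysum χ hχ a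
    have h := (abs_sq_sum (fun i => ∑ ℓ, a ℓ * χ ℓ i)).trans
      (this.trans (abs_sq_sum a).symm)
    exact_mod_cast h
  have e2 : ∑ ℓ, ‖gft χ g ℓ‖ ^ 2 = ∑ i, ‖g i‖ ^ 2 := by
    have := parseval χ hχ g
    have h := (abs_sq_sum (gft χ g)).trans (this.trans (abs_sq_sum g).symm)
    exact_mod_cast h
  have e3 : ∑ ℓ, ‖a ℓ‖ ^ 2 ≤ ν ^ 2 * ∑ ℓ, ‖gft χ g ℓ‖ ^ 2 := by
    rw [Finset.mul_sum]
    refine Finset.sum_le_sum fun ℓ _ => ?_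
    have hle : ‖χ ℓ n‖ ≤ ν := hν.2 ⟨ℓ, rfl⟩
    rw [ha]
    simp only [norm_mul, Complex.norm_conj, mul_pow]
    calc ‖gft χ g ℓ‖ ^ 2 * ‖χ ℓ n‖ ^ 2
        ≤ ‖gft χ g ℓ‖ ^ 2 * ν ^ 2 := by
          gcongr
      _ = ν ^ 2 * ‖gft χ g ℓ‖ ^ 2 := mul_comm _ _
  calc nrm (gtrans χ n g) ^ 2 = ∑ i, ‖gtrans χ n g i‖ ^ 2 := hnrm _
    _ = (N : ℝ) * ∑ i, ‖∑ ℓ, a ℓ * χ ℓ i‖ ^ 2 := by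
        rw [Finset.mul_sum]
        exact Finset.sum_congr rfl fun i _ => hgt i
    _ = (N : ℝ) * ∑ ℓ, ‖a ℓ‖ ^ 2 := by rw [e1]
    _ ≤ (N : ℝ) * (ν ^ 2 * ∑ ℓ, ‖gft χ g ℓ‖ ^ 2) := by
        gcongr
    _ = (N : ℝ) * ν ^ 2 * nrm g ^ 2 := by rw [e2, hnrm g]; ring
end

section
/- For any complex-valued graph signal f ∈ C^N and any vertex n, |f̂(0)| ≤ ‖T_n f‖_2, where f̂(0) = ⟨f, χ_0⟩ and T_n is the generalized translation. -/
open Finset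

theorem parseval_aux {N : ℕ} (χ : Fin N → Fin N → ℂ) (hχ : IsONB χ) (a : Fin N → ℂ) :
    (∑ i, (Complex.normSq (∑ ℓ, a ℓ * χ ℓ i) : ℂ)) = ∑ ℓ, (Complex.normSq (a ℓ) : ℂ) := by
  unfold IsONB at hχ
  calc ∑ i, (Complex.normSq (∑ ℓ, a ℓ * χ ℓ i) : ℂ)
      = ∑ i, (∑ ℓ, a ℓ * χ ℓ i) * starRingEnd ℂ (∑ ℓ, a ℓ * χ ℓ i) :=
        Finset.sum_congr rfl fun i _ => (Complex.mul_conj _).symm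
    _ = ∑ i, ∑ ℓ, ∑ ℓ', a ℓ * starRingEnd ℂ (a ℓ') * (χ ℓ i * starRingEnd ℂ (χ ℓ' i)) := by
        refine Finset.sum_congr rfl fun i _ => ?_
        rw [map_sum, Finset.sum_mul_sum]
        exact Finset.sum_congr rfl fun ℓ _ => Finset.sum_congr rfl fun ℓ' _ => by
          rw [map_mul]; ring
    _ = ∑ ℓ, ∑ ℓ', a ℓ * starRingEnd ℂ (a ℓ') * ∑ i, χ ℓ i * starRingEnd ℂ (χ ℓ' i) := by
        rw [Finset.sum_comm]
        refine Finset.sum_congr rfl fun ℓ _ => ?_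
        rw [Finset.sum_comm]
        exact Finset.sum_congr rfl fun ℓ' _ => (Finset.mul_sum _ _ _).symm
    _ = ∑ ℓ, a ℓ * starRingEnd ℂ (a ℓ) := by
        simp only [hχ, mul_ite, mul_one, mul_zero, Finset.sum_ite_eq, Finset.mem_univ,
          if_true]
    _ = ∑ ℓ, (Complex.normSq (a ℓ) : ℂ) := by simp [Complex.mul_conj]

theorem stmt7 {N : ℕ} (hN : 0 < N) (χ : Fin N → Fin N → ℂ) (hχ : IsONB χ)
    (hconst : ∀ i j, χ ⟨0, hN⟩ i = χ ⟨0, hN⟩ j)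
    (hmod : ∀ i, ‖χ (⟨0, hN⟩ : Fin N) i‖ = 1 / Real.sqrt N)
    (f : Fin N → ℂ) (n : Fin N) :
    ‖gft χ f ⟨0, hN⟩‖ ≤ nrm (gtrans χ n f) := by
  set a : Fin N → ℂ := fun ℓ => gft χ f ℓ * starRingEnd ℂ (χ ℓ n) with ha
  have hNR : (0:ℝ) < N := by exact_mod_cast hN
  have hrow : (∑ i, Complex.normSq (∑ ℓ, a ℓ * χ ℓ i)) = ∑ ℓ, Complex.normSq (a ℓ) := by
    exact_mod_cast parseval_aux χ hχ a
  have habs : ∀ i, ‖gtrans χ n f i‖ ^ 2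
      = (N : ℝ) * Complex.normSq (∑ ℓ, a ℓ * χ ℓ i) := by
    intro i
    have h1 : gtrans χ n f i = ((Real.sqrt N : ℝ) : ℂ) * ∑ ℓ, a ℓ * χ ℓ i := rfl
    rw [Complex.sq_norm, h1, Complex.normSq_mul, Complex.normSq_ofReal,
      Real.mul_self_sqrt hNR.le]
  have hsum : (∑ i, ‖gtrans χ n f i‖ ^ 2)
      = (N : ℝ) * ∑ ℓ, Complex.normSq (a ℓ) := by
    rw [← hrow, Finset.mul_sum]
    exact Finset.sum_congr rfl fun i _ => habs i
  have ha0 : (N : ℝ) * Complex.normSq (a ⟨0, hN⟩) = ‖gft χ f ⟨0, hN⟩‖ ^ 2 := by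
    have : Complex.normSq (a ⟨0, hN⟩)
        = ‖gft χ f ⟨0, hN⟩‖ ^ 2 * (1 / Real.sqrt N) ^ 2 := by
      rw [← Complex.sq_norm, ha]
      simp only [map_mul, norm_mul, Complex.norm_conj, hmod n]
      ring
    rw [this, one_div, inv_pow, Real.sq_sqrt hNR.le]
    field_simp
  have hle : ‖gft χ f ⟨0, hN⟩‖ ^ 2 ≤ ∑ i, ‖gtrans χ n f i‖ ^ 2 := by
    rw [hsum, ← ha0]
    have := Finset.single_le_sum (f := fun ℓ => Complex.normSq (a ℓ))
      (fun ℓ _ => Complex.normSq_nonneg _) (Finset.mem_univ ⟨0, hN⟩)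
    nlinarith [Complex.normSq_nonneg (a ⟨0, hN⟩)]
  calc ‖gft χ f ⟨0, hN⟩‖
      = Real.sqrt (‖gft χ f ⟨0, hN⟩‖ ^ 2) := by
        rw [Real.sqrt_sq (norm_nonneg _)]
    _ ≤ nrm (gtrans χ n f) := Real.sqrt_le_sqrt hle
end

section
/- Two-window reconstruction formula: let g, γ ∈ C^N be windows with ⟨T_n γ, T_n g⟩ ≠ 0 for every vertex n. Then for every f ∈ C^N and every vertex i, f(i) = (1 / (N ⟨T_i γ, T_i g⟩)) Σ_{n=1}^N Σ_{k=0}^{N-1} ⟨f, g_{n,k}⟩ γ_{n,k}(i), where g_{n,k} = M_k T_n g and γ_{n,k} = M_k T_n γ. -/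
open Finset

/-- The translation kernel. -/
noncomputable def Sker {N : ℕ} (χ : Fin N → Fin N → ℂ) (u : Fin N → ℂ) (n j : Fin N) : ℂ :=
  ∑ ℓ, gft χ u ℓ * starRingEnd ℂ (χ ℓ n) * χ ℓ j

lemma hcol_of_ONB {N : ℕ} (χ : Fin N → Fin N → ℂ) (hχ : IsONB χ) (a b : Fin N) :
    (∑ k, starRingEnd ℂ (χ k a) * χ k b) = if a = b then 1 else 0 := by
  have h1 : (Matrix.of χ) * Matrix.conjTranspose (Matrix.of χ) = 1 := by
    ext ℓ ℓ'
    rw [Matrix.mul_apply]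
    simp only [Matrix.conjTranspose_apply, Matrix.of_apply, Matrix.one_apply, starRingEnd_apply]
    exact hχ ℓ ℓ'
  have h2 := mul_eq_one_comm.mp h1
  have h3 := congrFun (congrFun h2 a) b
  rw [Matrix.mul_apply] at h3
  simp only [Matrix.conjTranspose_apply, Matrix.of_apply, Matrix.one_apply,
    starRingEnd_apply] at h3 ⊢
  exact h3

/-- collapse over the last index -/
lemma exp_last {N : ℕ} (χ : Fin N → Fin N → ℂ) (hχ : IsONB χ) (u v : Fin N → ℂ) (a : Fin N) :
    (∑ x, Sker χ u a x * starRingEnd ℂ (Sker χ v a x)) =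
    ∑ ℓ, gft χ u ℓ * starRingEnd ℂ (gft χ v ℓ) * (χ ℓ a * starRingEnd ℂ (χ ℓ a)) := by
  have key : ∀ x, Sker χ u a x * starRingEnd ℂ (Sker χ v a x)
      = ∑ ℓ, ∑ m, (gft χ u ℓ * starRingEnd ℂ (χ ℓ a) * starRingEnd ℂ (gft χ v m) * χ m a)
          * (χ ℓ x * starRingEnd ℂ (χ m x)) := by
    intro x
    rw [Sker, Sker, map_sum, Finset.sum_mul_sum]
    refine Finset.sum_congr rfl fun ℓ _ => Finset.sum_congr rfl fun m _ => ?_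
    simp only [map_mul, Complex.conj_conj]
    ring
  rw [Finset.sum_congr rfl fun x _ => key x, Finset.sum_comm]
  refine Finset.sum_congr rfl fun ℓ _ => ?_
  rw [Finset.sum_comm]
  have key2 : ∀ m, (∑ x, (gft χ u ℓ * starRingEnd ℂ (χ ℓ a) * starRingEnd ℂ (gft χ v m) * χ m a)
      * (χ ℓ x * starRingEnd ℂ (χ m x)))
      = (gft χ u ℓ * starRingEnd ℂ (χ ℓ a) * starRingEnd ℂ (gft χ v m) * χ m a)
        * (if ℓ = m then 1 else 0) := by
    intro m
    rw [← Finset.mul_sum, hχ]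
  rw [Finset.sum_congr rfl fun m _ => key2 m]
  simp only [mul_ite, mul_one, mul_zero, Finset.sum_ite_eq, Finset.mem_univ, if_true]
  ring

/-- collapse over the first index -/
lemma exp_first {N : ℕ} (χ : Fin N → Fin N → ℂ) (hχ : IsONB χ) (u v : Fin N → ℂ) (x : Fin N) :
    (∑ n, Sker χ u n x * starRingEnd ℂ (Sker χ v n x)) =
    ∑ ℓ, gft χ u ℓ * starRingEnd ℂ (gft χ v ℓ) * (χ ℓ x * starRingEnd ℂ (χ ℓ x)) := by
  have key : ∀ n, Sker χ u n x * starRingEnd ℂ (Sker χ v n x)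
      = ∑ ℓ, ∑ m, (gft χ u ℓ * χ ℓ x * starRingEnd ℂ (gft χ v m) * starRingEnd ℂ (χ m x))
          * (starRingEnd ℂ (χ ℓ n) * χ m n) := by
    intro n
    rw [Sker, Sker, map_sum, Finset.sum_mul_sum]
    refine Finset.sum_congr rfl fun ℓ _ => Finset.sum_congr rfl fun m _ => ?_
    simp only [map_mul, Complex.conj_conj]
    ring
  rw [Finset.sum_congr rfl fun n _ => key n, Finset.sum_comm]
  refine Finset.sum_congr rfl fun ℓ _ => ?_
  rw [Finset.sum_comm]
  have key2 : ∀ m, (∑ n, (gft χ u ℓ * χ ℓ x * starRingEnd ℂ (gft χ v m) * starRingEnd ℂ (χ m x))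
      * (starRingEnd ℂ (χ ℓ n) * χ m n))
      = (gft χ u ℓ * χ ℓ x * starRingEnd ℂ (gft χ v m) * starRingEnd ℂ (χ m x))
        * (if ℓ = m then 1 else 0) := by
    intro m
    have hrow : (∑ n, starRingEnd ℂ (χ ℓ n) * χ m n) = if ℓ = m then 1 else 0 := by
      have := hχ m ℓ
      calc (∑ n, starRingEnd ℂ (χ ℓ n) * χ m n) = ∑ n, χ m n * starRingEnd ℂ (χ ℓ n) := by
            exact Finset.sum_congr rfl fun n _ => mul_comm _ _
        _ = if m = ℓ then 1 else 0 := hχ m ℓ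
        _ = if ℓ = m then 1 else 0 := by simp [eq_comm]
    rw [← Finset.mul_sum, hrow]
  rw [Finset.sum_congr rfl fun m _ => key2 m]
  simp only [mul_ite, mul_one, mul_zero, Finset.sum_ite_eq, Finset.mem_univ, if_true]
  ring

theorem stmt8 {N : ℕ} (χ : Fin N → Fin N → ℂ) (hχ : IsONB χ)
    (g γ : Fin N → ℂ)
    (hnd : ∀ n : Fin N, ip (gtrans χ n γ) (gtrans χ n g) ≠ 0)
    (f : Fin N → ℂ) (i : Fin N) :
    f i = (1 / ((N : ℂ) * ip (gtrans χ i γ) (gtrans χ i g))) *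
      ∑ n, ∑ k, ip f (atom χ g n k) * atom χ γ n k i := by
  classical
  set C : ℂ := ∑ ℓ, gft χ γ ℓ * starRingEnd ℂ (gft χ g ℓ) * (χ ℓ i * starRingEnd ℂ (χ ℓ i))
    with hC
  have hgt : ∀ (u : Fin N → ℂ) (n j : Fin N),
      gtrans χ n u j = ((Real.sqrt N : ℝ) : ℂ) * Sker χ u n j := fun _ _ _ => rfl
  have hatom : ∀ (u : Fin N → ℂ) (n k j : Fin N),
      atom χ u n k j = (N : ℂ) * χ k j * Sker χ u n j := fun _ _ _ _ => rfl
  have hsqrt : ((Real.sqrt N : ℝ) : ℂ) * starRingEnd ℂ ((Real.sqrt N : ℝ) : ℂ) = (N : ℂ) := by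
    rw [Complex.conj_ofReal, ← Complex.ofReal_mul,
      Real.mul_self_sqrt (Nat.cast_nonneg N)]
    simp
  -- ip of translates equals N * C
  have hip : ip (gtrans χ i γ) (gtrans χ i g) = (N : ℂ) * C := by
    rw [ip]
    have h1 : ∀ j, gtrans χ i γ j * starRingEnd ℂ (gtrans χ i g j)
        = (N : ℂ) * (Sker χ γ i j * starRingEnd ℂ (Sker χ g i j)) := by
      intro j
      rw [hgt, hgt, map_mul, ← hsqrt]
      ring
    rw [Finset.sum_congr rfl fun j _ => h1 j, ← Finset.mul_sum,
      exp_last χ hχ γ g i, hC]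
  -- inner k-sum
  have hk : ∀ n : Fin N, (∑ k, ip f (atom χ g n k) * atom χ γ n k i)
      = (N : ℂ) * (N : ℂ) * f i * (Sker χ γ n i * starRingEnd ℂ (Sker χ g n i)) := by
    intro n
    have h1 : ∀ k, ip f (atom χ g n k) * atom χ γ n k i
        = ∑ j, (f j * starRingEnd ℂ (Sker χ g n j) * ((N : ℂ) * (N : ℂ)) * Sker χ γ n i)
            * (starRingEnd ℂ (χ k j) * χ k i) := by
      intro k
      rw [ip, hatom, Finset.sum_mul]
      refine Finset.sum_congr rfl fun j _ => ?_
      rw [hatom]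
      simp only [map_mul, map_natCast]
      ring
    rw [Finset.sum_congr rfl fun k _ => h1 k, Finset.sum_comm]
    have h2 : ∀ j, (∑ k, (f j * starRingEnd ℂ (Sker χ g n j) * ((N : ℂ) * (N : ℂ))
        * Sker χ γ n i) * (starRingEnd ℂ (χ k j) * χ k i))
        = (f j * starRingEnd ℂ (Sker χ g n j) * ((N : ℂ) * (N : ℂ)) * Sker χ γ n i)
          * (if j = i then 1 else 0) := by
      intro j
      rw [← Finset.mul_sum, hcol_of_ONB χ hχ]
    rw [Finset.sum_congr rfl fun j _ => h2 j]
    simp only [mul_ite, mul_one, mul_zero, Finset.sum_ite_eq', Finset.mem_univ, if_true]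
    ring
  -- total double sum
  have htot : (∑ n, ∑ k, ip f (atom χ g n k) * atom χ γ n k i)
      = (N : ℂ) * (N : ℂ) * f i * C := by
    rw [Finset.sum_congr rfl fun n _ => hk n, ← Finset.mul_sum,
      exp_first χ hχ γ g i, hC]
  have hNC : (N : ℂ) * C ≠ 0 := by rw [← hip]; exact hnd i
  have hN : (N : ℂ) ≠ 0 := fun h => hNC (by rw [h, zero_mul])
  have hCne : C ≠ 0 := fun h => hNC (by rw [h, mul_zero])
  rw [hip, htot]
  field_simp
end

section
/- Synthesis identity: for any windows g, γ ∈ C^N, any f ∈ C^N, and any vertex i, Σ_{n=1}^N Σ_{k=0}^{N-1} ⟨f, g_{n,k}⟩ γ_{n,k}(i) = N f(i) ⟨T_i γ, T_i g⟩, where g_{n,k} = M_k T_n g and γ_{n,k} = M_k T_n γ. -/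
open Finset

open Matrix in
lemma L1 {N : ℕ} (χ : Fin N → Fin N → ℂ) (hχ : ∀ ℓ ℓ' : Fin N, (∑ i, χ ℓ i * starRingEnd ℂ (χ ℓ' i)) = if ℓ = ℓ' then 1 else 0) (a b : Fin N → ℂ) :
    ∑ n, (∑ ℓ, a ℓ * χ ℓ n) * (∑ m, b m * starRingEnd ℂ (χ m n)) = ∑ ℓ, a ℓ * b ℓ := by
  calc ∑ n, (∑ ℓ, a ℓ * χ ℓ n) * (∑ m, b m * starRingEnd ℂ (χ m n))
      = ∑ n, ∑ ℓ, ∑ m, a ℓ * b m * (χ ℓ n * starRingEnd ℂ (χ m n)) := by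
        refine Finset.sum_congr rfl fun n _ => ?_
        rw [Finset.sum_mul_sum]
        exact Finset.sum_congr rfl fun ℓ _ => Finset.sum_congr rfl fun m _ => by ring
    _ = ∑ ℓ, ∑ m, a ℓ * b m * ∑ n, χ ℓ n * starRingEnd ℂ (χ m n) := by
        rw [Finset.sum_comm]
        refine Finset.sum_congr rfl fun ℓ _ => ?_
        rw [Finset.sum_comm]
        exact Finset.sum_congr rfl fun m _ => (Finset.mul_sum _ _ _).symm
    _ = ∑ ℓ, a ℓ * b ℓ := by simp_rw [hχ]; simp

open Matrix in
lemma col {N : ℕ} (χ : Fin N → Fin N → ℂ) (hχ : ∀ ℓ ℓ' : Fin N, (∑ i, χ ℓ i * starRingEnd ℂ (χ ℓ' i)) = if ℓ = ℓ' then 1 else 0) (a b : Fin N) :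
    (∑ k, starRingEnd ℂ (χ k b) * χ k a) = if b = a then 1 else 0 := by
  have h1 : (Matrix.of χ) * (Matrix.of χ)ᴴ = 1 := by
    ext ℓ ℓ'
    simpa [Matrix.mul_apply, Matrix.conjTranspose_apply, Matrix.one_apply] using hχ ℓ ℓ'
  have h2 : (Matrix.of χ)ᴴ * (Matrix.of χ) = 1 := mul_eq_one_comm.mp h1
  have h3 := congrFun (congrFun h2 b) a
  simpa [Matrix.mul_apply, Matrix.conjTranspose_apply, Matrix.one_apply] using h3

lemma L2 {N : ℕ} (χ : Fin N → Fin N → ℂ) (hχ : ∀ ℓ ℓ' : Fin N, (∑ i, χ ℓ i * starRingEnd ℂ (χ ℓ' i)) = if ℓ = ℓ' then 1 else 0) (p : Fin N → ℂ) (a : Fin N) :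
    ∑ k, (∑ j, p j * starRingEnd ℂ (χ k j)) * χ k a = p a := by
  calc ∑ k, (∑ j, p j * starRingEnd ℂ (χ k j)) * χ k a
      = ∑ j, p j * ∑ k, starRingEnd ℂ (χ k j) * χ k a := by
        simp_rw [Finset.sum_mul]
        rw [Finset.sum_comm]
        refine Finset.sum_congr rfl fun j _ => ?_
        rw [Finset.mul_sum]
        exact Finset.sum_congr rfl fun k _ => by ring
    _ = p a := by simp_rw [col χ hχ]; simp

theorem stmt9 {N : ℕ} (χ : Fin N → Fin N → ℂ) (hχ : IsONB χ)
    (g γ : Fin N → ℂ) (f : Fin N → ℂ) (i : Fin N) :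
    ∑ n, ∑ k, ip f (atom χ g n k) * atom χ γ n k i =
      (N : ℂ) * f i * ip (gtrans χ i γ) (gtrans χ i g) := by
  have hsq : ((Real.sqrt N : ℝ) : ℂ) * ((Real.sqrt N : ℝ) : ℂ) = (N : ℂ) := by
    rw [← Complex.ofReal_mul, Real.mul_self_sqrt (Nat.cast_nonneg N)]
    norm_cast
  have hL : ∑ n, ∑ k, ip f (atom χ g n k) * atom χ γ n k i
      = (N : ℂ) * (N : ℂ) * f i *
        ∑ ℓ, (starRingEnd ℂ (gft χ g ℓ) * starRingEnd ℂ (χ ℓ i)) * (gft χ γ ℓ * χ ℓ i) := by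
    calc ∑ n, ∑ k, ip f (atom χ g n k) * atom χ γ n k i
        = ∑ n, ∑ k,
            (∑ j, (f j * ((N : ℂ) * starRingEnd ℂ (∑ ℓ, gft χ g ℓ * starRingEnd ℂ (χ ℓ n) * χ ℓ j)))
              * starRingEnd ℂ (χ k j)) * χ k i
            * ((N : ℂ) * ∑ m, gft χ γ m * starRingEnd ℂ (χ m n) * χ m i) := by
          refine Finset.sum_congr rfl fun n _ => Finset.sum_congr rfl fun k _ => ?_
          simp only [ip, atom, _root_.map_mul, map_natCast]
          rw [Finset.sum_mul, Finset.sum_mul, Finset.sum_mul]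
          exact Finset.sum_congr rfl fun j _ => by ring
      _ = ∑ n, (f i * ((N : ℂ) * starRingEnd ℂ (∑ ℓ, gft χ g ℓ * starRingEnd ℂ (χ ℓ n) * χ ℓ i)))
            * ((N : ℂ) * ∑ m, gft χ γ m * starRingEnd ℂ (χ m n) * χ m i) := by
          refine Finset.sum_congr rfl fun n _ => ?_
          rw [← Finset.sum_mul, L2 χ hχ]
      _ = (N : ℂ) * (N : ℂ) * f i *
            ∑ n, (∑ ℓ, (starRingEnd ℂ (gft χ g ℓ) * starRingEnd ℂ (χ ℓ i)) * χ ℓ n)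
              * (∑ m, (gft χ γ m * χ m i) * starRingEnd ℂ (χ m n)) := by
          rw [Finset.mul_sum]
          refine Finset.sum_congr rfl fun n _ => ?_
          simp only [map_sum, _root_.map_mul, Complex.conj_conj]
          rw [show (∑ ℓ, starRingEnd ℂ (gft χ g ℓ) * χ ℓ n * starRingEnd ℂ (χ ℓ i))
                = ∑ ℓ, (starRingEnd ℂ (gft χ g ℓ) * starRingEnd ℂ (χ ℓ i)) * χ ℓ n from
              Finset.sum_congr rfl fun ℓ _ => by ring,
            show (∑ m, gft χ γ m * starRingEnd ℂ (χ m n) * χ m i)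
                = ∑ m, (gft χ γ m * χ m i) * starRingEnd ℂ (χ m n) from
              Finset.sum_congr rfl fun m _ => by ring]
          ring
      _ = (N : ℂ) * (N : ℂ) * f i *
            ∑ ℓ, (starRingEnd ℂ (gft χ g ℓ) * starRingEnd ℂ (χ ℓ i)) * (gft χ γ ℓ * χ ℓ i) := by
          rw [L1 χ hχ]
  have hR : ip (gtrans χ i γ) (gtrans χ i g)
      = (N : ℂ) * ∑ ℓ, (gft χ γ ℓ * starRingEnd ℂ (χ ℓ i)) * (starRingEnd ℂ (gft χ g ℓ) * χ ℓ i) := by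
    calc ip (gtrans χ i γ) (gtrans χ i g)
        = ∑ n, (N : ℂ) * ((∑ ℓ, (gft χ γ ℓ * starRingEnd ℂ (χ ℓ i)) * χ ℓ n)
            * (∑ m, (starRingEnd ℂ (gft χ g m) * χ m i) * starRingEnd ℂ (χ m n))) := by
          refine Finset.sum_congr rfl fun n _ => ?_
          simp only [ip, gtrans, _root_.map_mul, map_sum, Complex.conj_ofReal, Complex.conj_conj]
          rw [← hsq]
          ring
      _ = (N : ℂ) * ∑ ℓ, (gft χ γ ℓ * starRingEnd ℂ (χ ℓ i)) * (starRingEnd ℂ (gft χ g ℓ) * χ ℓ i) := by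
          rw [← Finset.mul_sum, L1 χ hχ]
  rw [hL, hR,
    show (∑ ℓ, (starRingEnd ℂ (gft χ g ℓ) * starRingEnd ℂ (χ ℓ i)) * (gft χ γ ℓ * χ ℓ i))
        = ∑ ℓ, (gft χ γ ℓ * starRingEnd ℂ (χ ℓ i)) * (starRingEnd ℂ (gft χ g ℓ) * χ ℓ i) from
      Finset.sum_congr rfl fun ℓ _ => by ring]
  ring
end

section
/- Polarization-based sufficient condition: let g, γ ∈ C^N satisfy |ĝ(0) + γ̂(0)| > √N μ ‖ĝ - γ̂‖_2, where μ = max_{ℓ,n} |χ_ℓ(n)|. Then ⟨T_n g, T_n γ⟩ ≠ 0 for every vertex n. -/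
open Finset

lemma ip_gtrans {N : ℕ} (χ : Fin N → Fin N → ℂ) (hχ : IsONB χ) (n : Fin N)
    (f h : Fin N → ℂ) :
    ip (gtrans χ n f) (gtrans χ n h)
      = ((N : ℝ) : ℂ) * ∑ ℓ, gft χ f ℓ * starRingEnd ℂ (gft χ h ℓ) *
          ((‖χ ℓ n‖ ^ 2 : ℝ) : ℂ) := by
  set P : Fin N → ℂ := fun ℓ => gft χ f ℓ * starRingEnd ℂ (χ ℓ n) with hP
  set Q : Fin N → ℂ := fun ℓ => gft χ h ℓ * starRingEnd ℂ (χ ℓ n) with hQ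
  have c2 : ((Real.sqrt N : ℝ) : ℂ) * ((Real.sqrt N : ℝ) : ℂ) = ((N : ℝ) : ℂ) := by
    rw [← Complex.ofReal_mul, Real.mul_self_sqrt (Nat.cast_nonneg N)]
  have key : ∑ i, (∑ ℓ, P ℓ * χ ℓ i) * starRingEnd ℂ (∑ ℓ, Q ℓ * χ ℓ i)
      = ∑ ℓ, P ℓ * starRingEnd ℂ (Q ℓ) := by
    have : ∀ i : Fin N, (∑ ℓ, P ℓ * χ ℓ i) * starRingEnd ℂ (∑ ℓ, Q ℓ * χ ℓ i)
        = ∑ ℓ, ∑ ℓ', P ℓ * starRingEnd ℂ (Q ℓ') * (χ ℓ i * starRingEnd ℂ (χ ℓ' i)) := by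
      intro i
      rw [map_sum, Finset.sum_mul_sum]
      refine Finset.sum_congr rfl fun ℓ _ => Finset.sum_congr rfl fun ℓ' _ => ?_
      rw [map_mul]; ring
    rw [Finset.sum_congr rfl fun i _ => this i, Finset.sum_comm]
    refine Finset.sum_congr rfl fun ℓ _ => ?_
    rw [Finset.sum_comm]
    have : ∀ ℓ' : Fin N, ∑ i, P ℓ * starRingEnd ℂ (Q ℓ') * (χ ℓ i * starRingEnd ℂ (χ ℓ' i))
        = P ℓ * starRingEnd ℂ (Q ℓ') * (if ℓ = ℓ' then 1 else 0) := by
      intro ℓ'; rw [← Finset.mul_sum, hχ]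
    rw [Finset.sum_congr rfl fun ℓ' _ => this ℓ']
    simp
  calc ip (gtrans χ n f) (gtrans χ n h)
      = ∑ i, ((Real.sqrt N : ℝ) : ℂ) * ((Real.sqrt N : ℝ) : ℂ) *
          ((∑ ℓ, P ℓ * χ ℓ i) * starRingEnd ℂ (∑ ℓ, Q ℓ * χ ℓ i)) := by
        refine Finset.sum_congr rfl fun i _ => ?_
        simp only [gtrans, map_mul, Complex.conj_ofReal, hP, hQ]
        ring
    _ = ((N : ℝ) : ℂ) * ∑ ℓ, P ℓ * starRingEnd ℂ (Q ℓ) := by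
        rw [← Finset.mul_sum, key, c2]
    _ = _ := by
        refine congrArg _ (Finset.sum_congr rfl fun ℓ _ => ?_)
        have hz : (starRingEnd ℂ) (χ ℓ n) * χ ℓ n = ((‖χ ℓ n‖ ^ 2 : ℝ) : ℂ) := by
          rw [Complex.sq_norm, mul_comm, Complex.mul_conj]
        simp only [hP, hQ, map_mul, Complex.conj_conj]
        rw [← hz]; ring

lemma re_mul_conj' (a b : ℂ) :
    (a * starRingEnd ℂ b).re
      = (‖a + b‖ ^ 2 - ‖a - b‖ ^ 2) / 4 := by
  rw [Complex.sq_norm, Complex.sq_norm]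
  simp [Complex.normSq_apply, Complex.mul_re, Complex.add_re, Complex.add_im,
    Complex.sub_re, Complex.sub_im]
  ring

theorem stmt11 {N : ℕ} (hN : 0 < N) (χ : Fin N → Fin N → ℂ) (hχ : IsONB χ)
    (hconst : ∀ i j, χ ⟨0, hN⟩ i = χ ⟨0, hN⟩ j)
    (hmod : ∀ i, ‖χ (⟨0, hN⟩ : Fin N) i‖ = 1 / Real.sqrt N)
    (μ : ℝ)
    (hμ : IsGreatest {x : ℝ | ∃ ℓ n : Fin N, x = ‖χ ℓ n‖} μ)
    (g γ : Fin N → ℂ)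
    (hcond : ‖gft χ g ⟨0, hN⟩ + gft χ γ ⟨0, hN⟩‖ >
      Real.sqrt N * μ * Real.sqrt (∑ ℓ, ‖gft χ g ℓ - gft χ γ ℓ‖ ^ 2)) :
    ∀ n : Fin N, ip (gtrans χ n g) (gtrans χ n γ) ≠ 0 := by
  intro n h0
  set a : Fin N → ℂ := gft χ g with ha
  set b : Fin N → ℂ := gft χ γ with hb
  set w : Fin N → ℝ := fun ℓ => ‖χ ℓ n‖ ^ 2 with hw
  set S : ℝ := ∑ ℓ, ‖a ℓ - b ℓ‖ ^ 2 with hSdef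
  have hNpos : (0 : ℝ) < N := Nat.cast_pos.mpr hN
  have hS : 0 ≤ S := Finset.sum_nonneg fun ℓ _ => by positivity
  have hμ0 : 0 ≤ μ := by
    obtain ⟨ℓ, m, hm⟩ := hμ.1
    rw [hm]; exact norm_nonneg _
  -- real part of the inner product
  have hip := ip_gtrans χ hχ n g γ
  have hre : (ip (gtrans χ n g) (gtrans χ n γ)).re
      = (N : ℝ) * ∑ ℓ, (a ℓ * starRingEnd ℂ (b ℓ)).re * w ℓ := by
    rw [hip, Complex.mul_re]
    simp only [Complex.ofReal_re, Complex.ofReal_im, zero_mul, sub_zero]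
    congr 1
    rw [Complex.re_sum]
    refine Finset.sum_congr rfl fun ℓ _ => ?_
    rw [mul_comm, Complex.re_ofReal_mul, mul_comm]
  -- w at index 0
  have hw0 : w ⟨0, hN⟩ = 1 / (N : ℝ) := by
    simp only [hw, hmod]
    rw [div_pow, one_pow, Real.sq_sqrt (Nat.cast_nonneg N)]
  have hwle : ∀ ℓ, w ℓ ≤ μ ^ 2 := by
    intro ℓ
    have hmem : ‖χ ℓ n‖ ≤ μ := hμ.2 ⟨ℓ, n, rfl⟩
    exact pow_le_pow_left₀ (norm_nonneg _) hmem 2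
  -- squared hypothesis
  have hsq : (N : ℝ) * (μ ^ 2 * S) < ‖a ⟨0, hN⟩ + b ⟨0, hN⟩‖ ^ 2 := by
    have h1 : (Real.sqrt N * μ * Real.sqrt S) ^ 2
        < ‖a ⟨0, hN⟩ + b ⟨0, hN⟩‖ ^ 2 := by
      exact pow_lt_pow_left₀ hcond
        (mul_nonneg (mul_nonneg (Real.sqrt_nonneg _) hμ0) (Real.sqrt_nonneg _)) (by norm_num)
    calc (N : ℝ) * (μ ^ 2 * S) = (Real.sqrt N * μ * Real.sqrt S) ^ 2 := by
          rw [mul_pow, mul_pow, Real.sq_sqrt (Nat.cast_nonneg N), Real.sq_sqrt hS]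
          ring
      _ < _ := h1
  have hsum1 : ‖a ⟨0, hN⟩ + b ⟨0, hN⟩‖ ^ 2 * (1 / (N : ℝ))
      ≤ ∑ ℓ, ‖a ℓ + b ℓ‖ ^ 2 * w ℓ := by
    rw [← hw0]
    exact Finset.single_le_sum (f := fun ℓ => ‖a ℓ + b ℓ‖ ^ 2 * w ℓ)
      (fun ℓ _ => by positivity) (Finset.mem_univ _)
  have hsum2 : ∑ ℓ, ‖a ℓ - b ℓ‖ ^ 2 * w ℓ ≤ μ ^ 2 * S := by
    rw [hSdef, Finset.mul_sum]
    refine Finset.sum_le_sum fun ℓ _ => ?_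
    rw [mul_comm (μ ^ 2)]
    exact mul_le_mul_of_nonneg_left (hwle ℓ) (by positivity)
  have e : ∑ ℓ, (a ℓ * starRingEnd ℂ (b ℓ)).re * w ℓ
      = ((∑ ℓ, ‖a ℓ + b ℓ‖ ^ 2 * w ℓ)
          - ∑ ℓ, ‖a ℓ - b ℓ‖ ^ 2 * w ℓ) / 4 := by
    rw [← Finset.sum_sub_distrib, Finset.sum_div]
    refine Finset.sum_congr rfl fun ℓ _ => ?_
    rw [re_mul_conj']
    ring
  have hdiv : μ ^ 2 * S < ‖a ⟨0, hN⟩ + b ⟨0, hN⟩‖ ^ 2 * (1 / (N : ℝ)) := by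
    rw [mul_one_div, lt_div_iff₀ hNpos, mul_comm]
    exact hsq
  have hpos : 0 < (ip (gtrans χ n g) (gtrans χ n γ)).re := by
    rw [hre, e]
    have : (0:ℝ) < ((∑ ℓ, ‖a ℓ + b ℓ‖ ^ 2 * w ℓ)
        - ∑ ℓ, ‖a ℓ - b ℓ‖ ^ 2 * w ℓ) / 4 := by
      have := hsum1; have := hsum2; linarith
    exact mul_pos hNpos this
  rw [h0] at hpos
  simp at hpos
end

section
/- Parseval-type identity for windowed graph Fourier atoms: for any window g ∈ C^N and any f ∈ C^N, Σ_{n=1}^N Σ_{k=0}^{N-1} |⟨f, g_{n,k}⟩|^2 = N Σ_{i=1}^N |f(i)|^2 ‖T_i g‖_2^2, where g_{n,k} = M_k T_n g. -/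
open Finset

lemma orth_sum {N : ℕ} (ψ : Fin N → Fin N → ℂ)
    (h : ∀ a b, ∑ x, ψ a x * starRingEnd ℂ (ψ b x) = if a = b then 1 else 0)
    (u : Fin N → ℂ) :
    ∑ x, (∑ a, u a * ψ a x) * starRingEnd ℂ (∑ b, u b * ψ b x)
      = ∑ a, u a * starRingEnd ℂ (u a) := by
  have key : ∀ x, (∑ a, u a * ψ a x) * starRingEnd ℂ (∑ b, u b * ψ b x)
      = ∑ a, ∑ b, (u a * starRingEnd ℂ (u b)) * (ψ a x * starRingEnd ℂ (ψ b x)) := by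
    intro x
    rw [map_sum, Finset.sum_mul_sum]
    refine Finset.sum_congr rfl fun a _ => Finset.sum_congr rfl fun b _ => ?_
    simp only [map_mul]; ring
  calc ∑ x, (∑ a, u a * ψ a x) * starRingEnd ℂ (∑ b, u b * ψ b x)
      = ∑ a, ∑ b, (u a * starRingEnd ℂ (u b)) * ∑ x, ψ a x * starRingEnd ℂ (ψ b x) := by
        simp_rw [key, Finset.mul_sum]
        rw [Finset.sum_comm]
        refine Finset.sum_congr rfl fun a _ => ?_
        rw [Finset.sum_comm]
    _ = ∑ a, u a * starRingEnd ℂ (u a) := by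
        simp_rw [h]
        simp

lemma orth_abs {N : ℕ} (ψ : Fin N → Fin N → ℂ)
    (h : ∀ a b, ∑ x, ψ a x * starRingEnd ℂ (ψ b x) = if a = b then 1 else 0)
    (u : Fin N → ℂ) :
    ∑ x, ‖∑ a, u a * ψ a x‖ ^ 2 = ∑ a, ‖u a‖ ^ 2 := by
  have h1 : ∀ z : ℂ, z * starRingEnd ℂ z = ((‖z‖ ^ 2 : ℝ) : ℂ) := by
    intro z; rw [Complex.mul_conj, Complex.sq_norm]
  have h2 := orth_sum ψ h u
  simp_rw [h1] at h2
  exact_mod_cast h2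

theorem stmt12 {N : ℕ} (χ : Fin N → Fin N → ℂ) (hχ : IsONB χ)
    (g f : Fin N → ℂ) :
    ∑ n, ∑ k, ‖ip f (atom χ g n k)‖ ^ 2 =
      (N : ℝ) * ∑ i, ‖f i‖ ^ 2 * nrm (gtrans χ i g) ^ 2 := by
  -- column orthonormality
  have hcol : ∀ i j, (∑ ℓ, starRingEnd ℂ (χ ℓ i) * χ ℓ j) = if i = j then 1 else 0 := by
    have h1 : (Matrix.of χ) * (Matrix.of χ).conjTranspose = 1 := by
      ext ℓ ℓ'
      simpa [Matrix.mul_apply, Matrix.conjTranspose_apply, Matrix.one_apply] using hχ ℓ ℓ'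
    have h2 := mul_eq_one_comm.mp h1
    intro i j
    have := congrFun (congrFun h2 i) j
    simpa [Matrix.mul_apply, Matrix.conjTranspose_apply, Matrix.one_apply] using this
  set c : Fin N → ℂ := gft χ g with hc
  set T : Fin N → Fin N → ℂ := fun n i => ∑ ℓ, c ℓ * starRingEnd ℂ (χ ℓ n) * χ ℓ i with hT
  -- step A
  have hA : ∀ n k, ip f (atom χ g n k)
      = (N : ℂ) * ∑ i, (f i * starRingEnd ℂ (T n i)) * starRingEnd ℂ (χ k i) := by
    intro n k
    unfold ip atom
    rw [Finset.mul_sum]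
    refine Finset.sum_congr rfl fun i _ => ?_
    simp only [hT, hc, map_mul, map_natCast]
    ring
  -- Parseval over k
  have hB : ∀ n, ∑ k, ‖ip f (atom χ g n k)‖ ^ 2
      = (N : ℝ)^2 * ∑ i, ‖f i‖ ^ 2 * ‖T n i‖ ^ 2 := by
    intro n
    have horth : ∀ a b, ∑ x, (starRingEnd ℂ (χ x a)) * starRingEnd ℂ (starRingEnd ℂ (χ x b))
        = if a = b then 1 else 0 := by
      intro a b
      simp only [RingHomCompTriple.comp_apply, RingHom.id_apply, Complex.conj_conj] at *
      simpa using hcol a b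
    have := orth_abs (fun a x => starRingEnd ℂ (χ x a)) horth
      (fun i => f i * starRingEnd ℂ (T n i))
    simp_rw [hA, norm_mul, Complex.norm_natCast, mul_pow]
    rw [← Finset.mul_sum]
    congr 1
    rw [this]
    refine Finset.sum_congr rfl fun i _ => ?_
    rw [norm_mul, Complex.norm_conj, mul_pow]
  -- sum over n of |T n i|^2
  have hC : ∀ i, ∑ n, ‖T n i‖ ^ 2 = ∑ ℓ, ‖c ℓ * χ ℓ i‖ ^ 2 := by
    intro i
    have horth : ∀ a b, ∑ x, (starRingEnd ℂ (χ a x)) * starRingEnd ℂ (starRingEnd ℂ (χ b x))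
        = if a = b then 1 else 0 := by
      intro a b
      simp only [Complex.conj_conj]
      have := hχ b a
      calc ∑ x, starRingEnd ℂ (χ a x) * χ b x = starRingEnd ℂ (∑ x, χ a x * starRingEnd ℂ (χ b x)) := by
            rw [map_sum]; exact Finset.sum_congr rfl fun x _ => by rw [map_mul, Complex.conj_conj]
        _ = if a = b then 1 else 0 := by rw [hχ a b]; split <;> simp
    have := orth_abs (fun ℓ n => starRingEnd ℂ (χ ℓ n)) horth (fun ℓ => c ℓ * χ ℓ i)
    rw [← this]
    refine Finset.sum_congr rfl fun n _ => ?_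
    congr 1
    refine congrArg _ (Finset.sum_congr rfl fun ℓ _ => ?_)
    ring
  -- nrm of gtrans
  have hD : ∀ i, nrm (gtrans χ i g) ^ 2 = (N : ℝ) * ∑ ℓ, ‖c ℓ * χ ℓ i‖ ^ 2 := by
    intro i
    have hnn : 0 ≤ ∑ j, ‖gtrans χ i g j‖ ^ 2 :=
      Finset.sum_nonneg fun j _ => sq_nonneg _
    rw [nrm, Real.sq_sqrt hnn]
    have horth := fun a b => hχ a b
    have key := orth_abs χ horth (fun ℓ => c ℓ * starRingEnd ℂ (χ ℓ i))
    have hg : ∀ j, ‖gtrans χ i g j‖ ^ 2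
        = (N : ℝ) * ‖∑ ℓ, (c ℓ * starRingEnd ℂ (χ ℓ i)) * χ ℓ j‖ ^ 2 := by
      intro j
      rw [gtrans]
      rw [norm_mul, mul_pow]
      have h1 : ‖((Real.sqrt N : ℝ) : ℂ)‖ ^ 2 = (N : ℝ) := by
        rw [Complex.norm_of_nonneg (Real.sqrt_nonneg _),
          Real.sq_sqrt (Nat.cast_nonneg N)]
      have h2 : ∑ ℓ, gft χ g ℓ * starRingEnd ℂ (χ ℓ i) * χ ℓ j
          = ∑ ℓ, (c ℓ * starRingEnd ℂ (χ ℓ i)) * χ ℓ j :=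
        Finset.sum_congr rfl fun ℓ _ => by rw [hc]
      rw [h1, h2]
    simp_rw [hg]
    rw [← Finset.mul_sum, key]
    congr 1
    refine Finset.sum_congr rfl fun ℓ _ => ?_
    rw [norm_mul, norm_mul, Complex.norm_conj]
  -- assemble
  simp_rw [hB, hD]
  rw [← Finset.mul_sum]
  have : ∑ n, ∑ i, ‖f i‖ ^ 2 * ‖T n i‖ ^ 2
      = ∑ i, ‖f i‖ ^ 2 * ∑ ℓ, ‖c ℓ * χ ℓ i‖ ^ 2 := by
    rw [Finset.sum_comm]
    refine Finset.sum_congr rfl fun i _ => ?_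
    rw [← Finset.mul_sum, hC]
  rw [this]
  rw [Finset.mul_sum, Finset.mul_sum]
  refine Finset.sum_congr rfl fun i _ => ?_
  ring
end

section
/- Frame property: if g, γ ∈ C^N satisfy ⟨T_n γ, T_n g⟩ ≠ 0 for all vertices n, then the family {g_{n,k}}_{n=1,...,N; k=0,...,N-1} is a frame for C^N; explicitly, with a = min_i |⟨T_i γ, T_i g⟩| / ‖T_i γ‖_2 and b = max_i ‖T_i g‖_2, one has a² N ‖f‖_2² ≤ Σ_{n,k} |⟨f, g_{n,k}⟩|² ≤ b² N ‖f‖_2² for all f ∈ C^N. -/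
open Finset

lemma key {N : ℕ} (e : Fin N → Fin N → ℂ)
    (he : ∀ p q : Fin N, (∑ t, e p t * starRingEnd ℂ (e q t)) = if p = q then 1 else 0)
    (c : Fin N → ℂ) :
    ∑ t, (∑ p, c p * e p t) * starRingEnd ℂ (∑ q, c q * e q t)
      = ∑ p, c p * starRingEnd ℂ (c p) := by
  have h1 : ∀ t, (∑ p, c p * e p t) * starRingEnd ℂ (∑ q, c q * e q t)
      = ∑ p, ∑ q, (c p * starRingEnd ℂ (c q)) * (e p t * starRingEnd ℂ (e q t)) := by
    intro t
    rw [map_sum, Finset.sum_mul_sum]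
    exact Finset.sum_congr rfl fun p _ => Finset.sum_congr rfl fun q _ => by
      rw [_root_.map_mul]; ring
  simp_rw [h1]
  rw [Finset.sum_comm]
  have h2 : ∀ p, (∑ t, ∑ q, (c p * starRingEnd ℂ (c q)) * (e p t * starRingEnd ℂ (e q t)))
      = c p * starRingEnd ℂ (c p) := by
    intro p
    rw [Finset.sum_comm]
    have h3 : ∀ q, (∑ t, (c p * starRingEnd ℂ (c q)) * (e p t * starRingEnd ℂ (e q t)))
        = (c p * starRingEnd ℂ (c q)) * (if p = q then 1 else 0) := by
      intro q
      rw [← Finset.mul_sum, he]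
    simp_rw [h3]
    simp [mul_ite]
  simp_rw [h2]

lemma cast_abs_sq (z : ℂ) : ((‖z‖ ^ 2 : ℝ) : ℂ) = z * starRingEnd ℂ z := by
  rw [Complex.sq_norm, Complex.mul_conj]

open Matrix in
lemma hdual {N : ℕ} {χ : Fin N → Fin N → ℂ} (hχ : IsONB χ) (i j : Fin N) :
    (∑ ℓ, starRingEnd ℂ (χ ℓ i) * χ ℓ j) = if i = j then 1 else 0 := by
  let M : Matrix (Fin N) (Fin N) ℂ := Matrix.of χ
  have h1 : M * Mᴴ = 1 := by
    ext ℓ ℓ'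
    simpa [Matrix.mul_apply, Matrix.conjTranspose_apply, Matrix.one_apply, M] using hχ ℓ ℓ'
  have h2 : Mᴴ * M = 1 := mul_eq_one_comm.mp h1
  have h3 := congrFun (congrFun h2 i) j
  simpa [Matrix.mul_apply, Matrix.conjTranspose_apply, Matrix.one_apply, M] using h3

lemma hconj {N : ℕ} {χ : Fin N → Fin N → ℂ} (hχ : IsONB χ) (ℓ ℓ' : Fin N) :
    (∑ n, starRingEnd ℂ (χ ℓ n) * χ ℓ' n) = if ℓ = ℓ' then 1 else 0 := by
  have h := congrArg (starRingEnd ℂ) (hχ ℓ ℓ')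
  rw [map_sum, apply_ite (starRingEnd ℂ), _root_.map_one, _root_.map_zero] at h
  simp only [_root_.map_mul, Complex.conj_conj] at h
  exact h

noncomputable def Sfun {N : ℕ} (χ : Fin N → Fin N → ℂ) (g : Fin N → ℂ) (n i : Fin N) : ℂ :=
  ∑ ℓ, gft χ g ℓ * starRingEnd ℂ (χ ℓ n) * χ ℓ i

lemma hnrm {N : ℕ} {χ : Fin N → Fin N → ℂ} (hχ : IsONB χ) (g : Fin N → ℂ) (i : Fin N) :
    ((nrm (gtrans χ i g) ^ 2 : ℝ) : ℂ)
      = (N : ℂ) * ∑ ℓ, (gft χ g ℓ * starRingEnd ℂ (gft χ g ℓ))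
          * (χ ℓ i * starRingEnd ℂ (χ ℓ i)) := by
  have h0 : (nrm (gtrans χ i g)) ^ 2 = ∑ n, ‖gtrans χ i g n‖ ^ 2 :=
    Real.sq_sqrt (Finset.sum_nonneg fun n _ => by positivity)
  rw [h0, Complex.ofReal_sum]
  simp_rw [cast_abs_sq]
  have h1 : ∀ n, gtrans χ i g n * starRingEnd ℂ (gtrans χ i g n)
      = ((Real.sqrt N : ℝ) : ℂ) * starRingEnd ℂ ((Real.sqrt N : ℝ) : ℂ)
        * ((∑ ℓ, (gft χ g ℓ * starRingEnd ℂ (χ ℓ i)) * χ ℓ n)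
          * starRingEnd ℂ (∑ ℓ, (gft χ g ℓ * starRingEnd ℂ (χ ℓ i)) * χ ℓ n)) := by
    intro n
    rw [gtrans, _root_.map_mul]
    ring
  simp_rw [h1]
  rw [← Finset.mul_sum, key χ hχ (fun ℓ => gft χ g ℓ * starRingEnd ℂ (χ ℓ i))]
  have h2 : ((Real.sqrt N : ℝ) : ℂ) * starRingEnd ℂ ((Real.sqrt N : ℝ) : ℂ) = (N : ℂ) := by
    rw [Complex.conj_ofReal, ← Complex.ofReal_mul, Real.mul_self_sqrt (Nat.cast_nonneg N),
      Complex.ofReal_natCast]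
  rw [h2]
  congr 1
  refine Finset.sum_congr rfl fun ℓ _ => ?_
  rw [_root_.map_mul, Complex.conj_conj]
  ring

lemma master {N : ℕ} {χ : Fin N → Fin N → ℂ} (hχ : IsONB χ) (g f : Fin N → ℂ) :
    (∑ n, ∑ k, ‖ip f (atom χ g n k)‖ ^ 2)
      = N * ∑ i, ‖f i‖ ^ 2 * nrm (gtrans χ i g) ^ 2 := by
  apply Complex.ofReal_injective
  -- compute RHS
  have hrhs : ((N * ∑ i, ‖f i‖ ^ 2 * nrm (gtrans χ i g) ^ 2 : ℝ) : ℂ)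
      = (N : ℂ) ^ 2 * ∑ i, (f i * starRingEnd ℂ (f i))
          * ∑ ℓ, (gft χ g ℓ * starRingEnd ℂ (gft χ g ℓ)) * (χ ℓ i * starRingEnd ℂ (χ ℓ i)) := by
    rw [Complex.ofReal_mul, Complex.ofReal_natCast, Complex.ofReal_sum]
    have he : ∀ i : Fin N, ((‖f i‖ ^ 2 * nrm (gtrans χ i g) ^ 2 : ℝ) : ℂ)
        = (f i * starRingEnd ℂ (f i)) * ((N : ℂ) * ∑ ℓ, (gft χ g ℓ * starRingEnd ℂ (gft χ g ℓ))
          * (χ ℓ i * starRingEnd ℂ (χ ℓ i))) := by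
      intro i
      rw [Complex.ofReal_mul, cast_abs_sq, hnrm hχ g i]
    simp_rw [he]
    rw [Finset.mul_sum, Finset.mul_sum]
    exact Finset.sum_congr rfl fun i _ => by ring
  rw [hrhs]
  -- LHS: ip f (atom χ g n k)
  have hip : ∀ n k, ip f (atom χ g n k)
      = (N : ℂ) * ∑ i, (f i * starRingEnd ℂ (Sfun χ g n i)) * starRingEnd ℂ (χ k i) := by
    intro n k
    rw [ip, Finset.mul_sum]
    refine Finset.sum_congr rfl fun i _ => ?_
    have : atom χ g n k i = (N : ℂ) * χ k i * Sfun χ g n i := rfl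
    rw [this, _root_.map_mul, _root_.map_mul, map_natCast]
    ring
  have hsumk : ∀ n, ((∑ k, ‖ip f (atom χ g n k)‖ ^ 2 : ℝ) : ℂ)
      = (N : ℂ) ^ 2 * ∑ i, (f i * starRingEnd ℂ (f i))
          * (Sfun χ g n i * starRingEnd ℂ (Sfun χ g n i)) := by
    intro n
    rw [Complex.ofReal_sum]
    simp_rw [cast_abs_sq, hip]
    have h1 : ∀ k, ((N : ℂ) * ∑ i, (f i * starRingEnd ℂ (Sfun χ g n i)) * starRingEnd ℂ (χ k i))
        * starRingEnd ℂ ((N : ℂ) * ∑ i, (f i * starRingEnd ℂ (Sfun χ g n i)) * starRingEnd ℂ (χ k i))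
        = (N : ℂ) ^ 2 * ((∑ i, (f i * starRingEnd ℂ (Sfun χ g n i)) * starRingEnd ℂ (χ k i))
          * starRingEnd ℂ (∑ i, (f i * starRingEnd ℂ (Sfun χ g n i)) * starRingEnd ℂ (χ k i))) := by
      intro k
      rw [_root_.map_mul, map_natCast]
      ring
    simp_rw [h1]
    rw [← Finset.mul_sum]
    have h2 : ∀ i j : Fin N, (∑ k, (starRingEnd ℂ (χ k i)) * starRingEnd ℂ (starRingEnd ℂ (χ k j)))
        = if i = j then 1 else 0 := by
      intro i j
      simp_rw [Complex.conj_conj]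
      exact hdual hχ i j
    rw [key (fun i k => starRingEnd ℂ (χ k i)) h2 (fun i => f i * starRingEnd ℂ (Sfun χ g n i))]
    congr 1
    refine Finset.sum_congr rfl fun i _ => ?_
    rw [_root_.map_mul, Complex.conj_conj]
    ring
  rw [Complex.ofReal_sum]
  simp_rw [hsumk]
  rw [← Finset.mul_sum, Finset.sum_comm]
  congr 1
  refine Finset.sum_congr rfl fun i _ => ?_
  rw [← Finset.mul_sum]
  congr 1
  -- ∑ n, Sfun n i * conj (Sfun n i) = ∑ ℓ, |G ℓ|² |χ ℓ i|²
  have h3 : ∀ n, Sfun χ g n i = ∑ ℓ, (gft χ g ℓ * χ ℓ i) * starRingEnd ℂ (χ ℓ n) := by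
    intro n
    rw [Sfun]
    exact Finset.sum_congr rfl fun ℓ _ => by ring
  simp_rw [h3]
  have h4 : ∀ ℓ ℓ' : Fin N, (∑ n, (starRingEnd ℂ (χ ℓ n)) * starRingEnd ℂ (starRingEnd ℂ (χ ℓ' n)))
      = if ℓ = ℓ' then 1 else 0 := by
    intro ℓ ℓ'
    simp_rw [Complex.conj_conj]
    exact hconj hχ ℓ ℓ'
  rw [key (fun ℓ n => starRingEnd ℂ (χ ℓ n)) h4 (fun ℓ => gft χ g ℓ * χ ℓ i)]
  refine Finset.sum_congr rfl fun ℓ _ => ?_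
  rw [_root_.map_mul]
  ring

lemma nrm_eq {N : ℕ} (u : Fin N → ℂ) : nrm u = ‖WithLp.toLp 2 u‖ := by
  rw [EuclideanSpace.norm_eq, nrm]

lemma cs {N : ℕ} (u v : Fin N → ℂ) : ‖ip u v‖ ≤ nrm u * nrm v := by
  have h := norm_inner_le_norm (𝕜 := ℂ) (E := EuclideanSpace ℂ (Fin N)) (WithLp.toLp 2 v) (WithLp.toLp 2 u)
  rw [PiLp.inner_apply] at h
  have he : ip u v = ∑ i, (starRingEnd ℂ) (v i) * u i := by
    rw [ip]; exact Finset.sum_congr rfl fun i _ => by ring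
  rw [nrm_eq (N := N) u, nrm_eq (N := N) v, mul_comm]
  simpa [ip, RCLike.inner_apply] using h

theorem stmt14 {N : ℕ} (χ : Fin N → Fin N → ℂ) (hχ : IsONB χ)
    (g γ : Fin N → ℂ)
    (hnd : ∀ n : Fin N, ip (gtrans χ n γ) (gtrans χ n g) ≠ 0)
    (a b : ℝ)
    (ha : IsLeast {x : ℝ | ∃ i : Fin N,
      x = ‖ip (gtrans χ i γ) (gtrans χ i g)‖ / nrm (gtrans χ i γ)} a)
    (hb : IsGreatest {x : ℝ | ∃ i : Fin N, x = nrm (gtrans χ i g)} b) :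
    ∀ f : Fin N → ℂ,
      a ^ 2 * N * ∑ i, ‖f i‖ ^ 2 ≤
        (∑ n, ∑ k, ‖ip f (atom χ g n k)‖ ^ 2) ∧
      (∑ n, ∑ k, ‖ip f (atom χ g n k)‖ ^ 2) ≤
        b ^ 2 * N * ∑ i, ‖f i‖ ^ 2 := by
  intro f
  obtain ⟨⟨i0, hi0⟩, hlb⟩ := ha
  obtain ⟨⟨i1, hi1⟩, hub⟩ := hb
  have ha0 : 0 ≤ a := hi0 ▸ div_nonneg (norm_nonneg _) (Real.sqrt_nonneg _)
  have hb0 : 0 ≤ b := hi1 ▸ (Real.sqrt_nonneg _ : 0 ≤ nrm (gtrans χ i1 g))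
  have hai : ∀ i, a ≤ nrm (gtrans χ i g) := by
    intro i
    have h1 : a ≤ ‖ip (gtrans χ i γ) (gtrans χ i g)‖ / nrm (gtrans χ i γ) :=
      hlb ⟨i, rfl⟩
    have h2 : 0 < nrm (gtrans χ i γ) := by
      rcases (Real.sqrt_nonneg (∑ j, ‖gtrans χ i γ j‖ ^ 2)).eq_or_lt with h | h
      · exfalso
        apply hnd i
        have hs : (∑ j, ‖gtrans χ i γ j‖ ^ 2) = 0 := by
          have := Real.sqrt_eq_zero'.mp h.symm
          have hnn : 0 ≤ ∑ j, ‖gtrans χ i γ j‖ ^ 2 :=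
            Finset.sum_nonneg fun j _ => by positivity
          linarith
        have hz : ∀ j, gtrans χ i γ j = 0 := by
          intro j
          have := (Finset.sum_eq_zero_iff_of_nonneg
            (fun j _ => by positivity : ∀ j ∈ Finset.univ, (0:ℝ) ≤ ‖gtrans χ i γ j‖ ^ 2)).mp hs j (Finset.mem_univ j)
          have h4 : ‖gtrans χ i γ j‖ = 0 := by
            nlinarith [norm_nonneg (gtrans χ i γ j)]
          exact norm_eq_zero.mp h4
        rw [ip]
        exact Finset.sum_eq_zero fun j _ => by rw [hz j]; ring
      · exact h
    have h3 := cs (gtrans χ i γ) (gtrans χ i g)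
    refine h1.trans ?_
    rw [div_le_iff₀ h2]
    calc ‖ip (gtrans χ i γ) (gtrans χ i g)‖
        ≤ nrm (gtrans χ i γ) * nrm (gtrans χ i g) := h3
      _ = nrm (gtrans χ i g) * nrm (gtrans χ i γ) := mul_comm _ _
  have hbi : ∀ i, nrm (gtrans χ i g) ≤ b := fun i => hub ⟨i, rfl⟩
  have hm := master hχ g f
  constructor
  · rw [hm]
    have h5 : a ^ 2 * N * ∑ i, ‖f i‖ ^ 2
        = (N : ℝ) * ∑ i, a ^ 2 * ‖f i‖ ^ 2 := by
      rw [Finset.mul_sum, Finset.mul_sum]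
      exact Finset.sum_congr rfl fun i _ => by ring
    rw [h5]
    refine mul_le_mul_of_nonneg_left (Finset.sum_le_sum fun i _ => ?_) (Nat.cast_nonneg N)
    rw [mul_comm (‖f i‖ ^ 2)]
    exact mul_le_mul_of_nonneg_right (pow_le_pow_left₀ ha0 (hai i) 2) (by positivity)
  · rw [hm]
    have h5 : b ^ 2 * N * ∑ i, ‖f i‖ ^ 2
        = (N : ℝ) * ∑ i, b ^ 2 * ‖f i‖ ^ 2 := by
      rw [Finset.mul_sum, Finset.mul_sum]
      exact Finset.sum_congr rfl fun i _ => by ring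
    rw [h5]
    refine mul_le_mul_of_nonneg_left (Finset.sum_le_sum fun i _ => ?_) (Nat.cast_nonneg N)
    rw [mul_comm (‖f i‖ ^ 2)]
    exact mul_le_mul_of_nonneg_right
      (pow_le_pow_left₀ (Real.sqrt_nonneg _) (hbi i) 2) (by positivity)
end

section
/- Multi-window sufficient condition (spectral positivity): let g^1,...,g^J, γ^1,...,γ^J ∈ C^N with Σ_{j=1}^J Re(ĝ^j(ℓ)^* γ̂^j(ℓ)) ≥ 0 for all ℓ = 1,...,N-1 and Σ_{j=1}^J Re(ĝ^j(0)^* γ̂^j(0)) > 0. Then Σ_{j=1}^J ⟨T_i γ^j, T_i g^j⟩ ≠ 0 for every vertex i. -/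
open Finset

lemma onb_helper {N : ℕ} (χ : Fin N → Fin N → ℂ) (hχ : IsONB χ) (a b : Fin N → ℂ) :
    ∑ m, (∑ ℓ, a ℓ * χ ℓ m) * (∑ ℓ', b ℓ' * starRingEnd ℂ (χ ℓ' m)) = ∑ ℓ, a ℓ * b ℓ := by
  have h1 : ∀ m, (∑ ℓ, a ℓ * χ ℓ m) * (∑ ℓ', b ℓ' * starRingEnd ℂ (χ ℓ' m))
      = ∑ ℓ, ∑ ℓ', (a ℓ * b ℓ') * (χ ℓ m * starRingEnd ℂ (χ ℓ' m)) := by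
    intro m
    rw [Finset.sum_mul_sum]
    exact Finset.sum_congr rfl fun ℓ _ => Finset.sum_congr rfl fun ℓ' _ => by ring
  simp only [h1]
  rw [Finset.sum_comm]
  apply Finset.sum_congr rfl; intro ℓ _
  rw [Finset.sum_comm]
  have h2 : ∀ ℓ', ∑ m, a ℓ * b ℓ' * (χ ℓ m * starRingEnd ℂ (χ ℓ' m))
      = a ℓ * b ℓ' * (if ℓ = ℓ' then 1 else 0) := fun ℓ' => by rw [← Finset.mul_sum, hχ]
  simp only [h2, mul_ite, mul_one, mul_zero]
  simp

lemma ip_gtrans_key {N : ℕ} (χ : Fin N → Fin N → ℂ) (hχ : IsONB χ) (i : Fin N)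
    (f h : Fin N → ℂ) :
    ip (gtrans χ i f) (gtrans χ i h)
      = (N : ℂ) * ∑ ℓ, gft χ f ℓ * starRingEnd ℂ (gft χ h ℓ) *
          ((‖χ ℓ i‖ ^ 2 : ℝ) : ℂ) := by
  unfold ip gtrans
  have hc : (starRingEnd ℂ) ((Real.sqrt N : ℝ) : ℂ) = ((Real.sqrt N : ℝ) : ℂ) :=
    Complex.conj_ofReal _
  have hNc : ((Real.sqrt N : ℝ) : ℂ) * ((Real.sqrt N : ℝ) : ℂ) = (N : ℂ) := by
    rw [← Complex.ofReal_mul, Real.mul_self_sqrt (Nat.cast_nonneg N)]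
    simp
  have step : ∀ m : Fin N,
      (((Real.sqrt N : ℝ) : ℂ) * ∑ ℓ, gft χ f ℓ * starRingEnd ℂ (χ ℓ i) * χ ℓ m) *
        starRingEnd ℂ (((Real.sqrt N : ℝ) : ℂ) * ∑ ℓ, gft χ h ℓ * starRingEnd ℂ (χ ℓ i) * χ ℓ m)
      = (N : ℂ) * ((∑ ℓ, (gft χ f ℓ * starRingEnd ℂ (χ ℓ i)) * χ ℓ m) *
          (∑ ℓ', (starRingEnd ℂ (gft χ h ℓ') * χ ℓ' i) * starRingEnd ℂ (χ ℓ' m))) := by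
    intro m
    rw [map_mul, hc, map_sum]
    simp only [map_mul, Complex.conj_conj]
    have e1 : (∑ ℓ, gft χ f ℓ * starRingEnd ℂ (χ ℓ i) * χ ℓ m)
        = ∑ ℓ, (gft χ f ℓ * starRingEnd ℂ (χ ℓ i)) * χ ℓ m :=
      Finset.sum_congr rfl fun ℓ _ => by ring
    have e2 : (∑ ℓ, starRingEnd ℂ (gft χ h ℓ) * χ ℓ i * starRingEnd ℂ (χ ℓ m))
        = ∑ ℓ', (starRingEnd ℂ (gft χ h ℓ') * χ ℓ' i) * starRingEnd ℂ (χ ℓ' m) :=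
      Finset.sum_congr rfl fun ℓ _ => by ring
    rw [e1, e2, ← hNc]
    ring
  rw [Finset.sum_congr rfl (fun m _ => step m), ← Finset.mul_sum,
    onb_helper χ hχ (fun ℓ => gft χ f ℓ * starRingEnd ℂ (χ ℓ i))
      (fun ℓ' => starRingEnd ℂ (gft χ h ℓ') * χ ℓ' i)]
  congr 1
  apply Finset.sum_congr rfl; intro ℓ _
  have : ((‖χ ℓ i‖ ^ 2 : ℝ) : ℂ) = starRingEnd ℂ (χ ℓ i) * χ ℓ i := by
    rw [mul_comm, Complex.mul_conj]
    simp [Complex.sq_norm]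
  rw [this]; ring

theorem stmt17 {N J : ℕ} (hN : 0 < N) (χ : Fin N → Fin N → ℂ) (hχ : IsONB χ)
    (hmod : ∀ i, ‖χ (⟨0, hN⟩ : Fin N) i‖ = 1 / Real.sqrt N)
    (g γ : Fin J → Fin N → ℂ)
    (hpos : ∀ ℓ : Fin N, ℓ ≠ ⟨0, hN⟩ →
      0 ≤ ∑ j, (starRingEnd ℂ (gft χ (g j) ℓ) * gft χ (γ j) ℓ).re)
    (hpos0 : 0 < ∑ j, (starRingEnd ℂ (gft χ (g j) ⟨0, hN⟩) * gft χ (γ j) ⟨0, hN⟩).re) :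
    ∀ i : Fin N, (∑ j, ip (gtrans χ i (γ j)) (gtrans χ i (g j))) ≠ 0 := by
  intro i
  have hre : (∑ j, ip (gtrans χ i (γ j)) (gtrans χ i (g j))).re
      = (N : ℝ) * ∑ ℓ, (∑ j, (starRingEnd ℂ (gft χ (g j) ℓ) * gft χ (γ j) ℓ).re)
          * ‖χ ℓ i‖ ^ 2 := by
    rw [Finset.sum_congr rfl (fun j _ => ip_gtrans_key χ hχ i (γ j) (g j)), ← Finset.mul_sum]
    rw [Complex.mul_re]
    simp only [Complex.natCast_re, Complex.natCast_im, zero_mul, sub_zero]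
    congr 1
    simp only [Complex.re_sum]
    rw [Finset.sum_comm]
    apply Finset.sum_congr rfl; intro ℓ _
    rw [Finset.sum_mul]
    apply Finset.sum_congr rfl; intro j _
    rw [Complex.mul_re]
    simp only [Complex.ofReal_re, Complex.ofReal_im, mul_zero, sub_zero]
    congr 1
    rw [mul_comm]
  intro h0
  rw [h0, Complex.zero_re] at hre
  have hsumpos : 0 < ∑ ℓ, (∑ j, (starRingEnd ℂ (gft χ (g j) ℓ) * gft χ (γ j) ℓ).re)
      * ‖χ ℓ i‖ ^ 2 := by
    apply Finset.sum_pos'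
    · intro ℓ _
      by_cases hℓ : ℓ = ⟨0, hN⟩
      · subst hℓ
        exact mul_nonneg hpos0.le (sq_nonneg _)
      · exact mul_nonneg (hpos ℓ hℓ) (sq_nonneg _)
    · refine ⟨⟨0, hN⟩, Finset.mem_univ _, ?_⟩
      apply mul_pos hpos0
      rw [hmod i]
      positivity
  have : (0:ℝ) < (N : ℝ) * ∑ ℓ, (∑ j, (starRingEnd ℂ (gft χ (g j) ℓ) * gft χ (γ j) ℓ).re)
      * ‖χ ℓ i‖ ^ 2 := by
    apply mul_pos (by exact_mod_cast hN) hsumpos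
  linarith [this, hre.symm]
end
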